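/- Let x, y ∈ {a,b} with x ≠ y and y the last letter of s_n. Then for any n ≥ 1: y · (s_n with last letter removed) = w_{n-1} v_{n-2}, and equivalently (w_n with last letter removed followed by y) = v_{n-2} w_{n-1}. Here w_n and v_n are the singular and adjoining singular words, with conventions w_{-2} = v_{-2} = ε, w_{-1} = a. -/

import Mathlib

/-- Letters: `a` is `false`, `b` is `true`. -/
abbrev Word := List Bool

/-- `wpow w k` is the `k`-fold concatenation `w^k`. -/
def wpow (w : Word) (k : ℕ) : Word := (List.replicate k w).flatten

lemma wpow_zero (w : Word) : wpow w 0 = [] := rfl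
lemma wpow_succ (w : Word) (k : ℕ) : wpow w (k+1) = w ++ wpow w k := by
  simp [wpow, List.replicate_succ]
lemma wpow_succ' (w : Word) (k : ℕ) : wpow w (k+1) = wpow w k ++ w := by
  induction k with
  | zero => simp [wpow_succ, wpow_zero]
  | succ k ih => rw [wpow_succ, ih, ← List.append_assoc, ← wpow_succ, ih]
lemma wpow_comm (w : Word) (k : ℕ) : w ++ wpow w k = wpow w k ++ w := by
  rw [← wpow_succ, wpow_succ']

def Ob (n : ℤ) : Bool := decide (n % 2 = 1)

lemma Ob_odd (n : ℤ) : (if Odd n then ([false]:Word) else [true]) = [!Ob n] := by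
  by_cases h : Odd n
  · have h' := Int.odd_iff.1 h
    simp [Ob, h, h']
  · have h' : ¬ (n % 2 = 1) := fun hc => h (Int.odd_iff.2 hc)
    simp [Ob, h, h']

lemma Ob_sub_one (n : ℤ) : Ob (n-1) = !Ob n := by
  by_cases h : n % 2 = 1
  · have h2 : ¬ ((n-1) % 2 = 1) := by omega
    simp [Ob, h, h2]
  · have h2 : (n-1) % 2 = 1 := by omega
    simp [Ob, h, h2]

lemma Ob_sub_two (n : ℤ) : Ob (n-2) = Ob n := by
  have : (n-2) % 2 = n % 2 := by omega
  simp [Ob, this]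

lemma dropLast_app {A B : Word} (h : B ≠ []) : (A ++ B).dropLast = A ++ B.dropLast := by
  obtain ⟨c, hc⟩ := List.getLast?_isSome.2 h |> Option.isSome_iff_exists.1
  have hB := List.dropLast_append_getLast? c hc
  conv_lhs => rw [← hB]
  rw [← List.append_assoc, List.dropLast_concat]

lemma last_app {A B : Word} (h : B ≠ []) : (A ++ B).getLast? = B.getLast? :=
  List.getLast?_append_of_ne_nil A h

lemma lastA (d : ℤ → ℕ) (s : ℤ → Word)
    (hs1 : s (-1) = [true]) (hs0 : s 0 = [false])
    (hs : ∀ n : ℤ, 1 ≤ n → s n = wpow (s (n - 1)) (d n) ++ s (n - 2)) :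
    ∀ n : ℤ, -1 ≤ n → (s n).getLast? = some (Ob n) := by
  have key : ∀ k : ℕ, (s ((k:ℤ) - 1)).getLast? = some (Ob ((k:ℤ) - 1))
      ∧ (s (k:ℤ)).getLast? = some (Ob (k:ℤ)) := by
    intro k
    induction k with
    | zero =>
      refine ⟨?_, ?_⟩ <;> norm_num [hs1, hs0] <;> simp [Ob] <;> decide
    | succ k ih =>
      have e1 : ((k+1:ℕ):ℤ) - 1 = (k:ℤ) := by push_cast; ring
      have e2 : ((k+1:ℕ):ℤ) = (k:ℤ) + 1 := by push_cast; ring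
      refine ⟨by rw [e1]; exact ih.2, ?_⟩
      rw [e2, hs _ (by omega)]
      have e3 : ((k:ℤ)+1) - 2 = (k:ℤ) - 1 := by ring
      rw [e3]
      have hne : s ((k:ℤ)-1) ≠ [] := by
        intro hc
        have := ih.1
        rw [hc] at this
        simp at this
      rw [last_app hne, ih.1]
      congr 1
      rw [show ((k:ℤ)-1) = ((k:ℤ)+1) - 2 by ring, Ob_sub_two]
  intro n hn
  obtain ⟨k, hk⟩ : ∃ k : ℕ, n = (k:ℤ) - 1 := ⟨(n+1).toNat, by omega⟩
  rw [hk]; exact (key k).1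

lemma swapC (d : ℤ → ℕ) (s : ℤ → Word)
    (hd : ∀ n : ℤ, 1 ≤ n → 1 ≤ d n)
    (hs1 : s (-1) = [true]) (hs0 : s 0 = [false])
    (hs : ∀ n : ℤ, 1 ≤ n → s n = wpow (s (n - 1)) (d n) ++ s (n - 2)) :
    ∀ n : ℤ, 1 ≤ n → ∃ E, s n ++ s (n-1) = E ++ [Ob n, Ob (n-1)]
      ∧ s (n-1) ++ s n = E ++ [Ob (n-1), Ob n] := by
  intro n hn
  refine Int.le_induction (motive := fun n _ => ∃ E, s n ++ s (n-1) = E ++ [Ob n, Ob (n-1)]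
      ∧ s (n-1) ++ s n = E ++ [Ob (n-1), Ob n]) ?_ ?_ n hn
  · refine ⟨wpow [false] (d 1), ?_, ?_⟩ <;>
      norm_num [hs 1 le_rfl, hs0, hs1]
    · have h1 : Ob 1 = true := by decide
      have h0 : Ob 0 = false := by decide
      simp [h1, h0]
    · have h1 : Ob 1 = true := by decide
      have h0 : Ob 0 = false := by decide
      rw [← List.singleton_append, ← List.append_assoc, wpow_comm]
      simp [h1, h0]
  · intro n hn ih
    obtain ⟨E, hE1, hE2⟩ := ih
    have e1 : (n:ℤ) + 1 - 1 = n := by ring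
    have e2 : (n:ℤ) + 1 - 2 = n - 1 := by ring
    have hsn : s (n+1) = wpow (s n) (d (n+1)) ++ s (n-1) := by
      rw [hs (n+1) (by omega), e1, e2]
    have hOb : Ob (n-1) = Ob (n+1) := by
      rw [← Ob_sub_two (n+1), e2]
    refine ⟨wpow (s n) (d (n+1)) ++ E, ?_, ?_⟩
    · rw [e1, hsn, List.append_assoc, hE2, hOb]
      simp
    · rw [e1, hsn, ← List.append_assoc, wpow_comm, List.append_assoc, hE1, hOb]
      simp

lemma lastTwoB (d : ℤ → ℕ) (s : ℤ → Word)
    (hd : ∀ n : ℤ, 1 ≤ n → 1 ≤ d n)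
    (hs1 : s (-1) = [true]) (hs0 : s 0 = [false])
    (hs : ∀ n : ℤ, 1 ≤ n → s n = wpow (s (n - 1)) (d n) ++ s (n - 2)) :
    ∀ n : ℤ, 1 ≤ n → ∃ p, s n = p ++ [!Ob n, Ob n] := by
  have hA := lastA d s hs1 hs0 hs
  have hne : ∀ m : ℤ, -1 ≤ m → s m ≠ [] := by
    intro m hm hc
    have := hA m hm
    rw [hc] at this; simp at this
  intro n hn
  obtain ⟨E, _, hE2⟩ := swapC d s hd hs1 hs0 hs n hn
  set t := (s n).dropLast with ht
  have hsplit : s n = t ++ [Ob n] :=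
    (List.dropLast_append_getLast? _ (Option.mem_def.mpr (hA n (by omega)))).symm
  have htne : t ≠ [] := by
    obtain ⟨m, hm⟩ : ∃ m, d n = m + 1 := ⟨d n - 1, by have := hd n hn; omega⟩
    have h2 : s n = s (n-1) ++ (wpow (s (n-1)) m ++ s (n-2)) := by
      rw [hs n hn, hm, wpow_succ, List.append_assoc]
    have h3 : wpow (s (n-1)) m ++ s (n-2) ≠ [] := by
      simp only [ne_eq, List.append_eq_nil_iff]
      intro ⟨_, hc⟩; exact hne (n-2) (by omega) hc
    rw [ht, h2, dropLast_app h3]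
    simp only [ne_eq, List.append_eq_nil_iff, not_and]
    intro hc; exact absurd hc (hne (n-1) (by omega))
  have h' : (s (n-1) ++ t) ++ [Ob n] = (E ++ [Ob (n-1)]) ++ [Ob n] := by
    rw [List.append_assoc, ← hsplit, hE2]; simp
  have h : s (n-1) ++ t = E ++ [Ob (n-1)] := (List.append_left_inj _).mp h'
  have hlt : t.getLast? = some (!Ob n) := by
    have := congrArg List.getLast? h
    rw [last_app htne, List.getLast?_concat] at this
    rw [this, Ob_sub_one]
  refine ⟨t.dropLast, ?_⟩
  have : t = t.dropLast ++ [!Ob n] :=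
    (List.dropLast_append_getLast? _ (Option.mem_def.mpr hlt)).symm
  rw [hsplit, this]; simp


/-- For `n ≥ 1`, if `y` is the last letter of `sₙ`, then
`y · (sₙ with last letter removed) = wₙ₋₁ vₙ₋₂` and
`(wₙ with last letter removed) · y = vₙ₋₂ wₙ₋₁`. -/
theorem singular_word_conjugate_identity (d : ℤ → ℕ) (s : ℤ → Word)
    (hd : ∀ n : ℤ, 1 ≤ n → 1 ≤ d n)
    (hs1 : s (-1) = [true]) (hs0 : s 0 = [false])
    (hs : ∀ n : ℤ, 1 ≤ n → s n = wpow (s (n - 1)) (d n) ++ s (n - 2))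
    (w : ℤ → Word)
    (hw : ∀ n : ℤ, 0 ≤ n → w n = (if Odd n then [false] else [true]) ++ (s n).dropLast)
    (hwm1 : w (-1) = [false]) (hwm2 : w (-2) = [])
    (v : ℤ → Word)
    (hv : ∀ n : ℤ, -1 ≤ n → v n = (if Odd n then [false] else [true]) ++ (wpow (s (n + 1)) (d (n + 2) - 1) ++ s n).dropLast)
    (hvm2 : v (-2) = [])
    (n : ℤ) (hn : 1 ≤ n) (y : Bool) (hy : (s n).getLast? = some y) :
    [y] ++ (s n).dropLast = w (n - 1) ++ v (n - 2) ∧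
    (w n).dropLast ++ [y] = v (n - 2) ++ w (n - 1) := by
  have hA := lastA d s hs1 hs0 hs
  have hne : ∀ m : ℤ, -1 ≤ m → s m ≠ [] := by
    intro m hm hc
    have := hA m hm
    rw [hc] at this; simp at this
  have hsplit : ∀ m : ℤ, -1 ≤ m → s m = (s m).dropLast ++ [Ob m] := fun m hm =>
    (List.dropLast_append_getLast? _ (Option.mem_def.mpr (hA m hm))).symm
  have hy' : y = Ob n := by
    have := hy.symm.trans (hA n (by omega))
    exact Option.some_inj.mp this
  subst hy'
  obtain ⟨m, hm⟩ : ∃ m, d n = m + 1 := ⟨d n - 1, by have := hd n hn; omega⟩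
  have hdm : d n - 1 = m := by omega
  have hW : wpow (s (n-1)) (d n) = s (n-1) ++ wpow (s (n-1)) (d n - 1) := by
    rw [hdm, hm, wpow_succ]
  have hW2 : wpow (s (n-1)) (d n) = wpow (s (n-1)) (d n - 1) ++ s (n-1) := by
    rw [hdm, hm, wpow_succ']
  have hwn1 : w (n-1) = [Ob n] ++ (s (n-1)).dropLast := by
    rw [hw (n-1) (by omega), Ob_odd, Ob_sub_one, Bool.not_not]
  have hvn2 : v (n-2) = [!Ob n] ++ (wpow (s (n-1)) (d n - 1) ++ (s (n-2)).dropLast) := by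
    rw [hv (n-2) (by omega)]
    have e1 : n - 2 + 1 = n - 1 := by ring
    have e2 : n - 2 + 2 = n := by ring
    rw [e1, e2, Ob_odd, dropLast_app (hne (n-2) (by omega)), Ob_sub_two]
  have hdl : (s n).dropLast = wpow (s (n-1)) (d n) ++ (s (n-2)).dropLast := by
    rw [hs n hn, dropLast_app (hne (n-2) (by omega))]
  constructor
  · rw [hdl, hwn1, hvn2, hW, hsplit (n-1) (by omega), Ob_sub_one]
    simp [List.append_assoc]
  · -- second part
    have hwn : w n = [!Ob n] ++ (s n).dropLast := by
      rw [hw n (by omega), Ob_odd]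
    rcases lt_or_ge n 3 with h3 | h3
    · -- n = 1 or n = 2
      interval_cases n
      · -- n = 1
        have hs1' : s 1 = wpow [false] (d 1) ++ [true] := by
          rw [hs 1 le_rfl]; norm_num [hs0, hs1]
        have hOb1 : Ob 1 = true := by decide
        have hw1 : w 1 = ([false] ++ wpow [false] m) ++ [false] := by
          rw [hwn, hs1', List.dropLast_concat, hOb1, hm, wpow_succ']
          simp [List.append_assoc]
        have hv1 : v (-1) = [false] ++ wpow [false] m := by
          have e1 : (-1 : ℤ) + 1 = 0 := by norm_num
          have e2 : (-1 : ℤ) + 2 = 1 := by norm_num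
          rw [hv (-1) (by omega), e1, e2, Ob_odd, hs0, hs1, hdm,
            List.dropLast_concat, show Ob (-1) = true from by decide]
          simp
        have hw0 : w 0 = [true] := by
          rw [hw 0 le_rfl, Ob_odd, hs0, show Ob 0 = false from by decide]
          simp
        rw [show (1:ℤ) - 2 = -1 by norm_num, show (1:ℤ) - 1 = 0 by norm_num,
          hw1, hv1, hw0, List.dropLast_concat, hOb1]
      · -- n = 2
        have hs1' : s 1 = wpow [false] (d 1) ++ [true] := by
          rw [hs 1 le_rfl]; norm_num [hs0, hs1]
        have hs2' : s 2 = wpow (s 1) (d 2) ++ [false] := by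
          rw [hs 2 (by norm_num)]; norm_num [hs0]
        have hOb2 : Ob 2 = false := by decide
        have gdrop : ∀ (A B : Word) (c x : Bool),
            ([x] ++ (A ++ (B ++ [c]))).dropLast = [x] ++ (A ++ B) := by
          intro A B c x
          rw [show ([x] ++ (A ++ (B ++ [c]))) = ([x] ++ (A ++ B)) ++ [c] by simp,
            List.dropLast_concat]
        have hw2d : (w 2).dropLast = [true] ++ (wpow (s 1) m ++ wpow [false] (d 1)) := by
          rw [hwn, hs2', List.dropLast_concat, hOb2, hm, wpow_succ', hs1', gdrop]
          simp
        have hv0 : v 0 = [true] ++ wpow (s 1) m := by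
          have e1 : (0 : ℤ) + 1 = 1 := by norm_num
          have e2 : (0 : ℤ) + 2 = 2 := by norm_num
          rw [hv 0 (by omega), e1, e2, Ob_odd, hs0, hdm, List.dropLast_concat,
            show Ob 0 = false from by decide]
          simp
        have hw1' : w 1 = [false] ++ wpow [false] (d 1) := by
          rw [hw 1 (by omega), Ob_odd, hs1', List.dropLast_concat,
            show Ob 1 = true from by decide]
          simp
        rw [show (2:ℤ) - 2 = 0 by norm_num, show (2:ℤ) - 1 = 1 by norm_num,
          hw2d, hv0, hw1', hOb2, wpow_comm]
        simp [List.append_assoc]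
    · -- n ≥ 3
      obtain ⟨p, hp0⟩ := lastTwoB d s hd hs1 hs0 hs (n-2) (by omega)
      have hp : s (n-2) = p ++ [!Ob n, Ob n] := by rw [hp0, Ob_sub_two]
      obtain ⟨q, hq0⟩ := lastTwoB d s hd hs1 hs0 hs (n-1) (by omega)
      have hq : s (n-1) = q ++ [Ob n, !Ob n] := by rw [hq0, Ob_sub_one, Bool.not_not]
      obtain ⟨E, hE1, hE2⟩ := swapC d s hd hs1 hs0 hs (n-1) (by omega)
      have e12 : n - 1 - 1 = n - 2 := by ring
      rw [e12, Ob_sub_one, Ob_sub_two] at hE1 hE2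
      have hqE : s (n-1) ++ p = E := by
        have h' : (s (n-1) ++ p) ++ [!Ob n, Ob n] = E ++ [!Ob n, Ob n] := by
          rw [List.append_assoc, ← hp, hE1]
        exact (List.append_left_inj _).mp h'
      have hpE : s (n-2) ++ q = E := by
        have h' : (s (n-2) ++ q) ++ [Ob n, !Ob n] = E ++ [Ob n, !Ob n] := by
          rw [List.append_assoc, ← hq, hE2]
        exact (List.append_left_inj _).mp h'
      have hkey : s (n-1) ++ p = s (n-2) ++ q := by rw [hqE, hpE]
      have dln2 : (s (n-2)).dropLast = p ++ [!Ob n] := by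
        rw [hp, show p ++ [!Ob n, Ob n] = (p ++ [!Ob n]) ++ [Ob n] by simp,
          List.dropLast_concat]
      have dln1 : (s (n-1)).dropLast = q ++ [Ob n] := by
        rw [hq, show q ++ [Ob n, !Ob n] = (q ++ [Ob n]) ++ [!Ob n] by simp,
          List.dropLast_concat]
      have hwd : (w n).dropLast = [!Ob n] ++ (wpow (s (n-1)) (d n) ++ p) := by
        rw [hwn, hdl, dln2,
          show ([!Ob n] ++ (wpow (s (n-1)) (d n) ++ (p ++ [!Ob n])) : Word)
            = ([!Ob n] ++ (wpow (s (n-1)) (d n) ++ p)) ++ [!Ob n] by simp,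
          List.dropLast_concat]
      rw [hwd, hvn2, hwn1, dln2, dln1, hW2]
      have h2 := congrArg
        (fun L : Word => ([!Ob n] ++ (wpow (s (n-1)) (d n - 1) ++ L)) ++ [Ob n]) hkey
      rw [hp] at h2
      simp only [List.append_assoc, List.cons_append, List.singleton_append,
        List.nil_append] at h2 ⊢
      exact h2
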